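/- Let s be a finite set of cardinality N ≥ 2, let 2 ≤ P ≤ N, and let x : ι → ℝ. Then the sum over all P-element subsets C of s of (∑_{j ∈ C} x_j)² equals (N−1 choose P−1) · ∑_{j ∈ s} x_j² + (N−2 choose P−2) · ((∑_{j ∈ s} x_j)² − ∑_{j ∈ s} x_j²). -/

import Mathlib

open Finset

lemma aux_count {ι : Type*} [DecidableEq ι] (s t : Finset ι) (ht : t ⊆ s) (P : ℕ)
    (hP : t.card ≤ P) :
    ((s.powersetCard P).filter (fun C => t ⊆ C)).card
      = (s.card - t.card).choose (P - t.card) := by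
  rw [← card_sdiff_of_subset ht, ← card_powersetCard (P - t.card) (s \ t)]
  apply Finset.card_bij (fun C _ => C \ t)
  · intro C hC
    simp only [mem_filter, mem_powersetCard] at hC
    obtain ⟨⟨hCs, hCcard⟩, htC⟩ := hC
    rw [mem_powersetCard]
    exact ⟨sdiff_subset_sdiff hCs Subset.rfl, by rw [card_sdiff_of_subset htC, hCcard]⟩
  · intro C hC C' hC' h
    simp only [mem_filter, mem_powersetCard] at hC hC'
    have : C \ t ∪ t = C' \ t ∪ t := by rw [h]
    rwa [sdiff_union_of_subset hC.2, sdiff_union_of_subset hC'.2] at this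
  · intro D hD
    rw [mem_powersetCard] at hD
    obtain ⟨hDs, hDcard⟩ := hD
    have hdisj : Disjoint D t := (subset_sdiff.mp hDs).2
    refine ⟨D ∪ t, ?_, ?_⟩
    · simp only [mem_filter, mem_powersetCard]
      refine ⟨⟨union_subset ((subset_sdiff.mp hDs).1) ht, ?_⟩, subset_union_right⟩
      rw [card_union_of_disjoint hdisj, hDcard, Nat.sub_add_cancel hP]
    · rw [union_sdiff_cancel_right hdisj]


/-- Second-moment identity for random batch sums: the sum over all `P`-element subsets
`C` of `s` of `(∑ j ∈ C, x j)^2` equals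
`(N-1).choose (P-1) * ∑ j ∈ s, (x j)^2 + (N-2).choose (P-2) * ((∑ j ∈ s, x j)^2 - ∑ j ∈ s, (x j)^2)`. -/
theorem stmt_2 {ι : Type*} [DecidableEq ι] (s : Finset ι) (N P : ℕ)
    (hN : s.card = N) (hN2 : 2 ≤ N) (hP2 : 2 ≤ P) (hPN : P ≤ N) (x : ι → ℝ) :
    ∑ C ∈ s.powersetCard P, (∑ j ∈ C, x j) ^ 2
      = ((N - 1).choose (P - 1) : ℝ) * ∑ j ∈ s, (x j) ^ 2
        + ((N - 2).choose (P - 2) : ℝ) * ((∑ j ∈ s, x j) ^ 2 - ∑ j ∈ s, (x j) ^ 2) := by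
  set A : ℝ := ((N - 1).choose (P - 1) : ℝ) with hA
  set B : ℝ := ((N - 2).choose (P - 2) : ℝ) with hB
  have key : ∀ i ∈ s, ∀ j ∈ s,
      (∑ C ∈ s.powersetCard P, if i ∈ C ∧ j ∈ C then x i * x j else 0)
        = if i = j then A * (x i * x j) else B * (x i * x j) := by
    intro i hi j hj
    have hpred : ∀ C : Finset ι, (i ∈ C ∧ j ∈ C) ↔ ({i, j} : Finset ι) ⊆ C := by
      intro C; rw [insert_subset_iff, singleton_subset_iff]
    have hsum : (∑ C ∈ s.powersetCard P, if i ∈ C ∧ j ∈ C then x i * x j else 0)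
        = (((s.powersetCard P).filter (fun C => ({i, j} : Finset ι) ⊆ C)).card : ℝ)
          * (x i * x j) := by
      simp_rw [hpred]
      rw [← Finset.sum_filter, Finset.sum_const, nsmul_eq_mul]
    rw [hsum]
    have hsub : ({i, j} : Finset ι) ⊆ s := by
      rw [insert_subset_iff, singleton_subset_iff]; exact ⟨hi, hj⟩
    by_cases hij : i = j
    · subst hij
      have : ({i, i} : Finset ι) = {i} := by simp
      rw [if_pos rfl, this] at *
      rw [aux_count s {i} (by simpa using hi) P (by simp; omega)]
      simp [hN, hA]
    · rw [if_neg hij, aux_count s {i, j} hsub P ?_]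
      · rw [card_insert_of_notMem (by simp [hij]), card_singleton, hN]
      · rw [card_insert_of_notMem (by simp [hij]), card_singleton]; omega
  have expand : ∀ C ∈ s.powersetCard P,
      (∑ j ∈ C, x j) ^ 2 = ∑ i ∈ s, ∑ j ∈ s, if i ∈ C ∧ j ∈ C then x i * x j else 0 := by
    intro C hC
    have hCs : C ⊆ s := (mem_powersetCard.mp hC).1
    rw [sq, Finset.sum_mul_sum]
    rw [← Finset.sum_subset hCs
      (fun i _ hi => Finset.sum_eq_zero fun j _ => if_neg (fun h => hi h.1))]
    refine Finset.sum_congr rfl fun i hi => ?_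
    rw [← Finset.sum_subset hCs (fun j _ hj => if_neg (fun h => hj h.2))]
    exact Finset.sum_congr rfl fun j hj => (if_pos ⟨hi, hj⟩).symm
  calc ∑ C ∈ s.powersetCard P, (∑ j ∈ C, x j) ^ 2
      = ∑ C ∈ s.powersetCard P, ∑ i ∈ s, ∑ j ∈ s, if i ∈ C ∧ j ∈ C then x i * x j else 0 :=
        Finset.sum_congr rfl expand
    _ = ∑ i ∈ s, ∑ j ∈ s, ∑ C ∈ s.powersetCard P, if i ∈ C ∧ j ∈ C then x i * x j else 0 := by
        rw [Finset.sum_comm]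
        exact Finset.sum_congr rfl fun i _ => Finset.sum_comm
    _ = ∑ i ∈ s, ∑ j ∈ s, if i = j then A * (x i * x j) else B * (x i * x j) :=
        Finset.sum_congr rfl fun i hi => Finset.sum_congr rfl fun j hj => key i hi j hj
    _ = ∑ i ∈ s, ∑ j ∈ s, (B * (x i * x j) + if i = j then (A - B) * (x i * x j) else 0) := by
        refine Finset.sum_congr rfl fun i _ => Finset.sum_congr rfl fun j _ => ?_
        split <;> ring
    _ = B * (∑ j ∈ s, x j) ^ 2 + (A - B) * ∑ j ∈ s, (x j) ^ 2 := by
        simp only [Finset.sum_add_distrib]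
        congr 1
        · rw [sq, Finset.sum_mul_sum]
          simp [Finset.mul_sum]
        · rw [Finset.mul_sum]
          refine Finset.sum_congr rfl fun i hi => ?_
          rw [Finset.sum_ite_eq s i (fun j => (A - B) * (x i * x j)), if_pos hi, sq]
    _ = A * ∑ j ∈ s, (x j) ^ 2 + B * ((∑ j ∈ s, x j) ^ 2 - ∑ j ∈ s, (x j) ^ 2) := by ring
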